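/- Let N ≥ 2 and 1 ≤ C < N. For every nonuniform p ∈ Δ_N°, H_C(p) > H_C(u) = C/N. Thus the uniform vector u is the unique global minimizer of the LRU hit rate H_C on Δ_N°, and equivalently the LRU miss rate 1 − H_C(p) is uniquely maximized at u on Δ_N°. -/

import Mathlib

open Finset

/-- The exact stationary LRU hit rate of a cache of capacity `C` under the
independent reference model with popularity vector `p`, given by the
residual-subset formula. -/
noncomputable def hitRate (N C : ℕ) (p : Fin N → ℝ) : ℝ :=
  ∑ m ∈ Finset.Icc (N - C + 1) N,
    (-1 : ℝ) ^ (m - (N - C + 1)) * ((m - 2).choose (m - (N - C + 1)) : ℝ) *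
      ∑ R ∈ (Finset.univ : Finset (Fin N)).powersetCard m,
        (∑ i ∈ R, p i ^ 2) / (∑ i ∈ R, p i)

namespace LRUAux

variable {N : ℕ}

/-- mass of a subset -/
def sp (p : Fin N → ℝ) (A : Finset (Fin N)) : ℝ := ∑ i ∈ A, p i

/-- Möbius-type coefficient: `Qf p A` is the probability that the set of the first
`|A|` items of the stationary size-biased (move-to-front) order is exactly `A`,
divided by `1 - sp p A`. -/
noncomputable def Qf (p : Fin N → ℝ) (A : Finset (Fin N)) : ℝ :=
  ∑ B ∈ A.powerset, (-1 : ℝ) ^ (A.card + B.card) * (1 - sp p B)⁻¹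

/-- expected popularity of the `(j+1)`-st item of the size-biased order -/
noncomputable def ej (p : Fin N → ℝ) (j : ℕ) : ℝ :=
  ∑ A ∈ (univ : Finset (Fin N)).powersetCard j, Qf p A * ∑ i ∈ Aᶜ, (p i) ^ 2

section basic

variable {p : Fin N → ℝ}

lemma sp_compl (h1 : ∑ i, p i = 1) (A : Finset (Fin N)) : sp p Aᶜ = 1 - sp p A := by
  have := Finset.sum_add_sum_compl A p
  unfold sp
  linarith

lemma sp_lt_one (hp : ∀ i, 0 < p i) (h1 : ∑ i, p i = 1) {A : Finset (Fin N)}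
    (hA : A ≠ univ) : sp p A < 1 := by
  obtain ⟨x, hx⟩ : ∃ x, x ∉ A := by
    by_contra h
    push_neg at h
    exact hA (Finset.eq_univ_of_forall h)
  calc sp p A < ∑ i, p i := by
        refine Finset.sum_lt_sum_of_subset (Finset.subset_univ A) (Finset.mem_univ x) hx
          (hp x) fun j _ _ => (hp j).le
    _ = 1 := h1

lemma ne_univ_of_subset {A B : Finset (Fin N)} (hBA : B ⊆ A) (hA : A ≠ univ) : B ≠ univ := by
  intro h; exact hA (Finset.eq_univ_of_forall fun x => hBA (h ▸ Finset.mem_univ x))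

lemma one_sub_sp_pos (hp : ∀ i, 0 < p i) (h1 : ∑ i, p i = 1) {A : Finset (Fin N)}
    (hA : A ≠ univ) : 0 < 1 - sp p A := by
  linarith [sp_lt_one hp h1 hA]

lemma Qf_empty : Qf p (∅ : Finset (Fin N)) = 1 := by
  simp [Qf, sp]

/-- the erased powerset as a filter -/
lemma powerset_erase (A : Finset (Fin N)) (a : Fin N) :
    (A.erase a).powerset = A.powerset.filter (fun B => a ∉ B) := by
  ext B
  simp [Finset.subset_erase, and_comm]

/-- The fundamental recursion for `Qf`. -/
lemma Qf_rec (hp : ∀ i, 0 < p i) (h1 : ∑ i, p i = 1) {A : Finset (Fin N)}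
    (hne : A.Nonempty) (hA : A ≠ univ) :
    Qf p A * (1 - sp p A) = ∑ a ∈ A, Qf p (A.erase a) * p a := by
  have hcard : 1 ≤ A.card := Finset.card_pos.2 hne
  -- rewrite RHS
  have hRHS : ∑ a ∈ A, Qf p (A.erase a) * p a
      = ∑ B ∈ A.powerset, (-1 : ℝ) ^ (A.card - 1 + B.card) * (1 - sp p B)⁻¹ * (sp p A - sp p B) := by
    have : ∀ a ∈ A, Qf p (A.erase a) * p a
        = ∑ B ∈ A.powerset, (if a ∉ B then (-1 : ℝ) ^ (A.card - 1 + B.card) * (1 - sp p B)⁻¹ * p a else 0) := by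
      intro a ha
      rw [Qf, Finset.sum_mul, powerset_erase, Finset.sum_filter]
      refine Finset.sum_congr rfl fun B _ => ?_
      by_cases h : a ∈ B <;> simp [h, Finset.card_erase_of_mem ha]
    rw [Finset.sum_congr rfl this, Finset.sum_comm]
    refine Finset.sum_congr rfl fun B hB => ?_
    have hBA : B ⊆ A := Finset.mem_powerset.1 hB
    calc ∑ a ∈ A, (if a ∉ B then (-1 : ℝ) ^ (A.card - 1 + B.card) * (1 - sp p B)⁻¹ * p a else 0)
        = ∑ a ∈ A.filter (fun a => a ∉ B),
            (-1 : ℝ) ^ (A.card - 1 + B.card) * (1 - sp p B)⁻¹ * p a :=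
          (Finset.sum_filter _ _).symm
      _ = ∑ a ∈ A \ B, (-1 : ℝ) ^ (A.card - 1 + B.card) * (1 - sp p B)⁻¹ * p a := by
          rw [Finset.sdiff_eq_filter]
      _ = (-1 : ℝ) ^ (A.card - 1 + B.card) * (1 - sp p B)⁻¹ * (sp p A - sp p B) := by
          rw [← Finset.mul_sum, Finset.sum_sdiff_eq_sub hBA]; rfl
  rw [hRHS]
  -- rewrite LHS
  have hsign : ∀ B : Finset (Fin N), (-1 : ℝ) ^ (A.card + B.card)
      = -(-1 : ℝ) ^ (A.card - 1 + B.card) := by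
    intro B
    have : A.card + B.card = (A.card - 1 + B.card) + 1 := by omega
    rw [this, pow_succ]; ring
  have hzero : ∑ B ∈ A.powerset, (-1 : ℝ) ^ (A.card + B.card) = 0 := by
    have : ∑ B ∈ A.powerset, (-1 : ℝ) ^ (A.card + B.card)
        = (-1 : ℝ) ^ A.card * ∑ B ∈ A.powerset, (-1 : ℝ) ^ B.card := by
      rw [Finset.mul_sum]; exact Finset.sum_congr rfl fun B _ => (pow_add _ _ _)
    rw [this]
    have h0 : ∑ B ∈ A.powerset, (-1 : ℝ) ^ B.card = 0 := by
      have := Finset.sum_powerset_neg_one_pow_card_of_nonempty (x := A) hne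
      exact_mod_cast congrArg (Int.cast : ℤ → ℝ) this
    rw [h0, mul_zero]
  have hterm : ∀ B ∈ A.powerset,
      (-1 : ℝ) ^ (A.card + B.card) * (1 - sp p B)⁻¹ * (1 - sp p A)
      = (-1 : ℝ) ^ (A.card + B.card)
        - (-1 : ℝ) ^ (A.card + B.card) * (1 - sp p B)⁻¹ * (sp p A - sp p B) := by
    intro B hB
    have hBu : B ≠ univ := ne_univ_of_subset (Finset.mem_powerset.1 hB) hA
    have h : (1 - sp p B) ≠ 0 := ne_of_gt (one_sub_sp_pos hp h1 hBu)
    field_simp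
    ring
  calc Qf p A * (1 - sp p A)
      = ∑ B ∈ A.powerset, (-1 : ℝ) ^ (A.card + B.card) * (1 - sp p B)⁻¹ * (1 - sp p A) := by
        rw [Qf, Finset.sum_mul]
    _ = ∑ B ∈ A.powerset, ((-1 : ℝ) ^ (A.card + B.card)
          - (-1 : ℝ) ^ (A.card + B.card) * (1 - sp p B)⁻¹ * (sp p A - sp p B)) :=
        Finset.sum_congr rfl hterm
    _ = - ∑ B ∈ A.powerset, (-1 : ℝ) ^ (A.card + B.card) * (1 - sp p B)⁻¹ * (sp p A - sp p B) := by
        rw [Finset.sum_sub_distrib, hzero, zero_sub]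
    _ = ∑ B ∈ A.powerset, (-1 : ℝ) ^ (A.card - 1 + B.card) * (1 - sp p B)⁻¹ * (sp p A - sp p B) := by
        rw [← Finset.sum_neg_distrib]
        exact Finset.sum_congr rfl fun B _ => by rw [hsign B]; ring

lemma Qf_pos (hp : ∀ i, 0 < p i) (h1 : ∑ i, p i = 1) :
    ∀ A : Finset (Fin N), A ≠ univ → 0 < Qf p A := by
  intro A
  induction A using Finset.strongInduction with
  | _ A ih =>
    intro hA
    rcases A.eq_empty_or_nonempty with rfl | hne
    · rw [Qf_empty]; norm_num
    · have hrec := Qf_rec hp h1 hne hA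
      have hpos : 0 < 1 - sp p A := one_sub_sp_pos hp h1 hA
      have hsum : 0 < ∑ a ∈ A, Qf p (A.erase a) * p a := by
        refine Finset.sum_pos (fun a ha => mul_pos ?_ (hp a)) hne
        exact ih (A.erase a) (Finset.erase_ssubset ha)
          (ne_univ_of_subset (Finset.erase_subset a A) hA)
      nlinarith

/-- generic exchange of `(B, a ∈ B)` with `(A, a ∉ A)` via `A = B.erase a`. -/
lemma exchange (j : ℕ) (f : Finset (Fin N) → Fin N → ℝ) :
    ∑ B ∈ (univ : Finset (Fin N)).powersetCard (j + 1), ∑ a ∈ B, f (B.erase a) a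
      = ∑ A ∈ (univ : Finset (Fin N)).powersetCard j, ∑ a ∈ Aᶜ, f A a := by
  rw [Finset.sum_sigma', Finset.sum_sigma']
  refine Finset.sum_nbij' (fun x => ⟨x.1.erase x.2, x.2⟩) (fun y => ⟨insert y.2 y.1, y.2⟩)
    ?_ ?_ ?_ ?_ ?_
  · rintro ⟨B, a⟩ hx
    simp only [Finset.mem_sigma, Finset.mem_powersetCard_univ] at hx ⊢
    simp only [Finset.mem_compl, Finset.mem_erase]
    exact ⟨by rw [Finset.card_erase_of_mem hx.2, hx.1]; omega, fun h => h.1 rfl⟩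
  · rintro ⟨A, a⟩ hy
    simp only [Finset.mem_sigma, Finset.mem_powersetCard_univ, Finset.mem_compl] at hy ⊢
    exact ⟨by rw [Finset.card_insert_of_notMem hy.2, hy.1], Finset.mem_insert_self a A⟩
  · rintro ⟨B, a⟩ hx
    simp only [Finset.mem_sigma, Finset.mem_powersetCard_univ] at hx
    simp [Finset.insert_erase hx.2]
  · rintro ⟨A, a⟩ hy
    simp only [Finset.mem_sigma, Finset.mem_powersetCard_univ, Finset.mem_compl] at hy
    simp [Finset.erase_insert hy.2]
  · rintro ⟨B, a⟩ _; rfl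

lemma card_ne_univ {j : ℕ} (hj : j < N) {A : Finset (Fin N)}
    (hA : A ∈ (univ : Finset (Fin N)).powersetCard j) : A ≠ univ := by
  rw [Finset.mem_powersetCard_univ] at hA
  intro h
  rw [h, Finset.card_univ, Fintype.card_fin] at hA
  omega

lemma m_one (hp : ∀ i, 0 < p i) (h1 : ∑ i, p i = 1) :
    ∀ j, j < N → ∑ A ∈ (univ : Finset (Fin N)).powersetCard j, Qf p A * (1 - sp p A) = 1 := by
  intro j
  induction j with
  | zero => intro _; simp [Qf_empty, sp]
  | succ j ih =>
    intro hj
    have step : ∑ B ∈ (univ : Finset (Fin N)).powersetCard (j + 1), Qf p B * (1 - sp p B)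
        = ∑ B ∈ (univ : Finset (Fin N)).powersetCard (j + 1), ∑ a ∈ B, Qf p (B.erase a) * p a := by
      refine Finset.sum_congr rfl fun B hB => ?_
      have hcard := Finset.mem_powersetCard_univ.1 hB
      exact Qf_rec hp h1 (Finset.card_pos.1 (by omega)) (card_ne_univ hj hB)
    rw [step, exchange j (fun A a => Qf p A * p a)]
    calc ∑ A ∈ (univ : Finset (Fin N)).powersetCard j, ∑ a ∈ Aᶜ, Qf p A * p a
        = ∑ A ∈ (univ : Finset (Fin N)).powersetCard j, Qf p A * (1 - sp p A) := by
          refine Finset.sum_congr rfl fun A _ => ?_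
          rw [← Finset.mul_sum]
          congr 1
          exact sp_compl h1 A
      _ = 1 := ih (by omega)

lemma D_step (hp : ∀ i, 0 < p i) (h1 : ∑ i, p i = 1) {j : ℕ} (hj : j + 1 < N) :
    ∑ A ∈ (univ : Finset (Fin N)).powersetCard (j + 1), Qf p A * (1 - sp p A) * sp p A
      = (∑ A ∈ (univ : Finset (Fin N)).powersetCard j, Qf p A * (1 - sp p A) * sp p A)
        + ej p j := by
  have step : ∑ B ∈ (univ : Finset (Fin N)).powersetCard (j + 1), Qf p B * (1 - sp p B) * sp p B
      = ∑ B ∈ (univ : Finset (Fin N)).powersetCard (j + 1),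
          ∑ a ∈ B, Qf p (B.erase a) * p a * sp p (insert a (B.erase a)) := by
    refine Finset.sum_congr rfl fun B hB => ?_
    have hcard := Finset.mem_powersetCard_univ.1 hB
    have hne : B.Nonempty := Finset.card_pos.1 (by omega)
    have hrec := Qf_rec hp h1 hne (card_ne_univ hj hB)
    calc Qf p B * (1 - sp p B) * sp p B
        = (∑ a ∈ B, Qf p (B.erase a) * p a) * sp p B := by rw [hrec]
      _ = ∑ a ∈ B, Qf p (B.erase a) * p a * sp p B := by rw [Finset.sum_mul]
      _ = _ := Finset.sum_congr rfl fun a ha => by rw [Finset.insert_erase ha]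
  rw [step, exchange j (fun A a => Qf p A * p a * sp p (insert a A))]
  unfold ej
  rw [← Finset.sum_add_distrib]
  refine Finset.sum_congr rfl fun A hA => ?_
  have hAc : ∀ a ∈ Aᶜ, sp p (insert a A) = sp p A + p a := by
    intro a ha
    rw [Finset.mem_compl] at ha
    unfold sp
    rw [Finset.sum_insert ha]
    ring
  calc ∑ a ∈ Aᶜ, Qf p A * p a * sp p (insert a A)
      = ∑ a ∈ Aᶜ, (Qf p A * (p a * sp p A) + Qf p A * p a ^ 2) := by
        refine Finset.sum_congr rfl fun a ha => ?_
        rw [hAc a ha]; ring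
    _ = Qf p A * (1 - sp p A) * sp p A + Qf p A * ∑ i ∈ Aᶜ, p i ^ 2 := by
        rw [Finset.sum_add_distrib, ← Finset.mul_sum, ← Finset.mul_sum]
        have : ∑ i ∈ Aᶜ, p i * sp p A = sp p Aᶜ * sp p A := by
          rw [sp, ← Finset.sum_mul]; rfl
        rw [this, sp_compl h1 A]
        ring

lemma sum_ej_eq_D (hp : ∀ i, 0 < p i) (h1 : ∑ i, p i = 1) :
    ∀ k, k < N → ∑ j ∈ Finset.range k, ej p j
      = ∑ A ∈ (univ : Finset (Fin N)).powersetCard k, Qf p A * (1 - sp p A) * sp p A := by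
  intro k
  induction k with
  | zero => simp [sp]
  | succ k ih =>
    intro hk
    rw [Finset.sum_range_succ, ih (by omega), D_step hp h1 hk]

lemma sum_ej_total (hp : ∀ i, 0 < p i) (h1 : ∑ i, p i = 1) (hN : 1 ≤ N) :
    ∑ j ∈ Finset.range N, ej p j = 1 := by
  obtain ⟨M, rfl⟩ : ∃ M, N = M + 1 := ⟨N - 1, by omega⟩
  rw [Finset.sum_range_succ, sum_ej_eq_D hp h1 M (by omega)]
  unfold ej
  rw [← Finset.sum_add_distrib]
  calc ∑ A ∈ (univ : Finset (Fin (M + 1))).powersetCard M,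
        (Qf p A * (1 - sp p A) * sp p A + Qf p A * ∑ i ∈ Aᶜ, p i ^ 2)
      = ∑ A ∈ (univ : Finset (Fin (M + 1))).powersetCard M, Qf p A * (1 - sp p A) := by
        refine Finset.sum_congr rfl fun A hA => ?_
        have hcard := Finset.mem_powersetCard_univ.1 hA
        have hcc : Aᶜ.card = 1 := by
          rw [Finset.card_compl, hcard, Fintype.card_fin]; omega
        obtain ⟨a, ha⟩ := Finset.card_eq_one.1 hcc
        have hsa : sp p Aᶜ = p a := by rw [ha]; simp [sp]
        have hsq : ∑ i ∈ Aᶜ, p i ^ 2 = (p a) ^ 2 := by rw [ha]; simp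
        have h2 : p a = 1 - sp p A := by rw [← hsa, sp_compl h1]
        rw [hsq, h2]
        ring
    _ = 1 := m_one hp h1 M (by omega)

lemma d_pos (hp : ∀ i, 0 < p i) (h1 : ∑ i, p i = 1) {j : ℕ} (hj : j + 2 ≤ N)
    {A : Finset (Fin N)} (hA : A ∈ (univ : Finset (Fin N)).powersetCard j)
    {a : Fin N} (ha : a ∈ Aᶜ) : 0 < 1 - sp p A - p a := by
  rw [Finset.mem_compl] at ha
  have hins : sp p (insert a A) = sp p A + p a := by
    rw [sp, Finset.sum_insert ha]; ring_nf; rfl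
  have hcard := Finset.mem_powersetCard_univ.1 hA
  have hnu : insert a A ≠ univ := by
    intro h
    have := congrArg Finset.card h
    rw [Finset.card_insert_of_notMem ha, Finset.card_univ, Fintype.card_fin, hcard] at this
    omega
  have := one_sub_sp_pos hp h1 hnu
  rw [hins] at this
  linarith

lemma sum_erase_p (h1 : ∑ i, p i = 1) {A : Finset (Fin N)} {a : Fin N} (ha : a ∈ Aᶜ) :
    ∑ b ∈ Aᶜ.erase a, p b = 1 - sp p A - p a := by
  have := Finset.sum_erase_add Aᶜ p ha
  have h2 : ∑ b ∈ Aᶜ, p b = 1 - sp p A := sp_compl h1 A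
  linarith

lemma ej_diff (hp : ∀ i, 0 < p i) (h1 : ∑ i, p i = 1) {j : ℕ} (hj : j + 2 ≤ N) :
    ej p j - ej p (j + 1)
      = ∑ A ∈ (univ : Finset (Fin N)).powersetCard j, Qf p A *
          ∑ a ∈ Aᶜ, ∑ b ∈ Aᶜ.erase a, p a * p b * (p a - p b) / (1 - sp p A - p a) := by
  have e1 : ej p (j + 1) = ∑ A ∈ (univ : Finset (Fin N)).powersetCard j,
      ∑ a ∈ Aᶜ, Qf p A * p a * ((1 - sp p A - p a)⁻¹ * ∑ b ∈ Aᶜ.erase a, p b ^ 2) := by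
    unfold ej
    have step : ∀ B ∈ (univ : Finset (Fin N)).powersetCard (j + 1),
        Qf p B * ∑ i ∈ Bᶜ, p i ^ 2
        = ∑ a ∈ B, Qf p (B.erase a) * p a *
            ((1 - sp p (insert a (B.erase a)))⁻¹ * ∑ i ∈ (insert a (B.erase a))ᶜ, p i ^ 2) := by
      intro B hB
      have hcard := Finset.mem_powersetCard_univ.1 hB
      have hne : B.Nonempty := Finset.card_pos.1 (by omega)
      have hBu : B ≠ univ := card_ne_univ (by omega) hB
      have hrec := Qf_rec hp h1 hne hBu
      have hnz : (1 - sp p B) ≠ 0 := ne_of_gt (one_sub_sp_pos hp h1 hBu)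
      have hQ : Qf p B = (∑ a ∈ B, Qf p (B.erase a) * p a) * (1 - sp p B)⁻¹ := by
        field_simp
        linarith [hrec]
      rw [hQ]
      rw [Finset.sum_mul, Finset.sum_mul]
      refine Finset.sum_congr rfl fun a ha => ?_
      rw [Finset.insert_erase ha]
      ring
    rw [Finset.sum_congr rfl step,
      exchange j (fun A a => Qf p A * p a * ((1 - sp p (insert a A))⁻¹ * ∑ i ∈ (insert a A)ᶜ, p i ^ 2))]
    refine Finset.sum_congr rfl fun A hA => Finset.sum_congr rfl fun a ha => ?_
    have ha' : a ∉ A := Finset.mem_compl.1 ha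
    rw [Finset.compl_insert]
    have hins : sp p (insert a A) = sp p A + p a := by
      rw [sp, Finset.sum_insert ha']; ring_nf; rfl
    rw [hins]
    ring_nf
  have e0 : ej p j = ∑ A ∈ (univ : Finset (Fin N)).powersetCard j,
      ∑ a ∈ Aᶜ, Qf p A * p a * ((1 - sp p A - p a)⁻¹ * (p a * ∑ b ∈ Aᶜ.erase a, p b)) := by
    unfold ej
    refine Finset.sum_congr rfl fun A hA => ?_
    rw [Finset.mul_sum]
    refine Finset.sum_congr rfl fun a ha => ?_
    have hd := d_pos hp h1 hj hA ha
    rw [sum_erase_p h1 ha]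
    field_simp
  rw [e0, e1, ← Finset.sum_sub_distrib]
  refine Finset.sum_congr rfl fun A hA => ?_
  rw [← Finset.sum_sub_distrib, Finset.mul_sum]
  refine Finset.sum_congr rfl fun a ha => ?_
  have hd := d_pos hp h1 hj hA ha
  have hdne : (1 - sp p A - p a) ≠ 0 := ne_of_gt hd
  have hinner : ∑ b ∈ Aᶜ.erase a, p a * p b * (p a - p b) / (1 - sp p A - p a)
      = (p a * (p a * ∑ b ∈ Aᶜ.erase a, p b) - p a * ∑ b ∈ Aᶜ.erase a, p b ^ 2)
        / (1 - sp p A - p a) := by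
    rw [← Finset.sum_div]
    congr 1
    rw [Finset.mul_sum, Finset.mul_sum, Finset.mul_sum, ← Finset.sum_sub_distrib]
    exact Finset.sum_congr rfl fun b _ => by ring
  rw [hinner]
  field_simp

lemma pair_swap {A : Finset (Fin N)} (g : Fin N → Fin N → ℝ) :
    ∑ a ∈ Aᶜ, ∑ b ∈ Aᶜ.erase a, g b a = ∑ a ∈ Aᶜ, ∑ b ∈ Aᶜ.erase a, g a b := by
  rw [Finset.sum_comm' (s' := fun y => Aᶜ.erase y) (t' := Aᶜ)]
  intro x y
  simp only [Finset.mem_erase]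
  constructor
  · rintro ⟨hx, hyx, hy⟩; exact ⟨⟨fun h => hyx h.symm, hx⟩, hy⟩
  · rintro ⟨⟨hxy, hx⟩, hy⟩; exact ⟨hx, fun h => hxy h.symm, hy⟩

lemma double_sum (hp : ∀ i, 0 < p i) (h1 : ∑ i, p i = 1) {j : ℕ} (hj : j + 2 ≤ N)
    {A : Finset (Fin N)} (hA : A ∈ (univ : Finset (Fin N)).powersetCard j) :
    2 * (∑ a ∈ Aᶜ, ∑ b ∈ Aᶜ.erase a, p a * p b * (p a - p b) / (1 - sp p A - p a))
      = ∑ a ∈ Aᶜ, ∑ b ∈ Aᶜ.erase a,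
          p a * p b * (p a - p b) ^ 2 / ((1 - sp p A - p a) * (1 - sp p A - p b)) := by
  set g : Fin N → Fin N → ℝ := fun a b => p a * p b * (p a - p b) / (1 - sp p A - p a) with hg
  have hswap : ∑ a ∈ Aᶜ, ∑ b ∈ Aᶜ.erase a, g b a = ∑ a ∈ Aᶜ, ∑ b ∈ Aᶜ.erase a, g a b :=
    pair_swap g
  have h2 : 2 * (∑ a ∈ Aᶜ, ∑ b ∈ Aᶜ.erase a, g a b)
      = ∑ a ∈ Aᶜ, ∑ b ∈ Aᶜ.erase a, (g a b + g b a) := by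
    rw [two_mul]
    nth_rewrite 2 [← hswap]
    rw [← Finset.sum_add_distrib]
    exact Finset.sum_congr rfl fun a _ => by rw [← Finset.sum_add_distrib]
  rw [h2]
  refine Finset.sum_congr rfl fun a ha => Finset.sum_congr rfl fun b hb => ?_
  have hbc : b ∈ Aᶜ := (Finset.mem_erase.1 hb).2
  have hda := d_pos hp h1 hj hA ha
  have hdb := d_pos hp h1 hj hA hbc
  have hdan : (1 - sp p A - p a) ≠ 0 := ne_of_gt hda
  have hdbn : (1 - sp p A - p b) ≠ 0 := ne_of_gt hdb
  rw [hg]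
  field_simp
  ring

lemma inner_nonneg (hp : ∀ i, 0 < p i) (h1 : ∑ i, p i = 1) {j : ℕ} (hj : j + 2 ≤ N)
    {A : Finset (Fin N)} (hA : A ∈ (univ : Finset (Fin N)).powersetCard j) :
    0 ≤ ∑ a ∈ Aᶜ, ∑ b ∈ Aᶜ.erase a, p a * p b * (p a - p b) / (1 - sp p A - p a) := by
  have h2 := double_sum hp h1 hj hA
  have hR : 0 ≤ ∑ a ∈ Aᶜ, ∑ b ∈ Aᶜ.erase a,
      p a * p b * (p a - p b) ^ 2 / ((1 - sp p A - p a) * (1 - sp p A - p b)) := by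
    refine Finset.sum_nonneg fun a ha => Finset.sum_nonneg fun b hb => ?_
    have hbc : b ∈ Aᶜ := (Finset.mem_erase.1 hb).2
    have hda := d_pos hp h1 hj hA ha
    have hdb := d_pos hp h1 hj hA hbc
    have := hp a; have := hp b
    positivity
  linarith

lemma inner_pos (hp : ∀ i, 0 < p i) (h1 : ∑ i, p i = 1) {j : ℕ} (hj : j + 2 ≤ N)
    {A : Finset (Fin N)} (hA : A ∈ (univ : Finset (Fin N)).powersetCard j)
    {a b : Fin N} (ha : a ∈ Aᶜ) (hb : b ∈ Aᶜ) (hpab : p a ≠ p b) :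
    0 < ∑ a ∈ Aᶜ, ∑ b ∈ Aᶜ.erase a, p a * p b * (p a - p b) / (1 - sp p A - p a) := by
  have hab : a ≠ b := fun h => hpab (by rw [h])
  have h2 := double_sum hp h1 hj hA
  have hterm : ∀ x ∈ Aᶜ, ∀ y ∈ Aᶜ.erase x,
      0 ≤ p x * p y * (p x - p y) ^ 2 / ((1 - sp p A - p x) * (1 - sp p A - p y)) := by
    intro x hx y hy
    have hyc : y ∈ Aᶜ := (Finset.mem_erase.1 hy).2
    have hdx := d_pos hp h1 hj hA hx
    have hdy := d_pos hp h1 hj hA hyc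
    have := hp x; have := hp y
    positivity
  have hR : 0 < ∑ x ∈ Aᶜ, ∑ y ∈ Aᶜ.erase x,
      p x * p y * (p x - p y) ^ 2 / ((1 - sp p A - p x) * (1 - sp p A - p y)) := by
    refine Finset.sum_pos' (fun x hx => Finset.sum_nonneg (hterm x hx)) ⟨a, ha, ?_⟩
    refine Finset.sum_pos' (hterm a ha) ⟨b, Finset.mem_erase.2 ⟨hab.symm, hb⟩, ?_⟩
    have hda := d_pos hp h1 hj hA ha
    have hdb := d_pos hp h1 hj hA hb
    have h1a := hp a; have h1b := hp b
    have hne : p a - p b ≠ 0 := sub_ne_zero.2 hpab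
    positivity
  linarith

lemma ej_antitone (hp : ∀ i, 0 < p i) (h1 : ∑ i, p i = 1) {j : ℕ} (hj : j + 2 ≤ N) :
    ej p (j + 1) ≤ ej p j := by
  have hdf := ej_diff hp h1 hj
  have h0 : 0 ≤ ∑ A ∈ (univ : Finset (Fin N)).powersetCard j, Qf p A *
      ∑ a ∈ Aᶜ, ∑ b ∈ Aᶜ.erase a, p a * p b * (p a - p b) / (1 - sp p A - p a) := by
    refine Finset.sum_nonneg fun A hA => mul_nonneg ?_ (inner_nonneg hp h1 hj hA)
    exact (Qf_pos hp h1 A (card_ne_univ (by omega) hA)).le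
  linarith

lemma ej_strict (hp : ∀ i, 0 < p i) (h1 : ∑ i, p i = 1) {j : ℕ} (hj : j + 2 ≤ N)
    {a b : Fin N} (hpab : p a ≠ p b) : ej p (j + 1) < ej p j := by
  have hab : a ≠ b := fun h => hpab (by rw [h])
  obtain ⟨A, hAsub, hAcard⟩ :=
    Finset.exists_subset_card_eq (s := (univ : Finset (Fin N)) \ {a, b}) (n := j) (by
      rw [Finset.card_sdiff_of_subset (Finset.subset_univ _), Finset.card_univ, Fintype.card_fin,
        Finset.card_pair hab]
      omega)
  have hA : A ∈ (univ : Finset (Fin N)).powersetCard j := Finset.mem_powersetCard_univ.2 hAcard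
  have hac : a ∈ Aᶜ := by
    rw [Finset.mem_compl]
    intro h
    have := hAsub h
    simp at this
  have hbc : b ∈ Aᶜ := by
    rw [Finset.mem_compl]
    intro h
    have := hAsub h
    simp at this
  have hdf := ej_diff hp h1 hj
  have h0 : 0 < ∑ A ∈ (univ : Finset (Fin N)).powersetCard j, Qf p A *
      ∑ a ∈ Aᶜ, ∑ b ∈ Aᶜ.erase a, p a * p b * (p a - p b) / (1 - sp p A - p a) := by
    refine Finset.sum_pos' (fun A' hA' => mul_nonneg
      (Qf_pos hp h1 A' (card_ne_univ (by omega) hA')).le (inner_nonneg hp h1 hj hA'))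
      ⟨A, hA, mul_pos (Qf_pos hp h1 A (card_ne_univ (by omega) hA))
        (inner_pos hp h1 hj hA hac hbc hpab)⟩
  linarith

lemma ej_chain (hp : ∀ i, 0 < p i) (h1 : ∑ i, p i = 1) {j : ℕ} :
    ∀ k, j ≤ k → k < N → ej p k ≤ ej p j := by
  intro k hjk
  induction k, hjk using Nat.le_induction with
  | base => intro _; exact le_refl _
  | succ k hjk ih =>
    intro hk
    exact le_trans (ej_antitone hp h1 (by omega)) (ih (by omega))

lemma alt_sum (n : ℕ) (hn : 1 ≤ n) :
    ∀ T, ∑ t ∈ Finset.range (T + 1), (-1 : ℝ) ^ t * (n.choose t : ℝ)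
      = (-1) ^ T * ((n - 1).choose T : ℝ) := by
  intro T
  induction T with
  | zero => simp
  | succ T ih =>
    rw [Finset.sum_range_succ, ih]
    have hpas : (n - 1).choose T + (n - 1).choose (T + 1) = n.choose (T + 1) := by
      obtain ⟨m, rfl⟩ : ∃ m, n = m + 1 := ⟨n - 1, by omega⟩
      simp [Nat.choose_succ_succ]
    have hcast : ((n.choose (T + 1) : ℕ) : ℝ)
        = ((n - 1).choose T : ℝ) + ((n - 1).choose (T + 1) : ℝ) := by
      exact_mod_cast hpas.symm
    rw [hcast]
    ring

lemma cnt_eq {s B : Finset (Fin N)} (hB : B ⊆ s) {j : ℕ} (hbj : B.card ≤ j) :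
    ((s.powersetCard j).filter (fun A => B ⊆ A)).card
      = (s.card - B.card).choose (j - B.card) := by
  have hbij : ((s.powersetCard j).filter (fun A => B ⊆ A)).card
      = ((s \ B).powersetCard (j - B.card)).card := by
    refine Finset.card_nbij' (fun A => A \ B) (fun D => B ∪ D) ?_ ?_ ?_ ?_
    · intro A hA
      rw [Finset.mem_coe, Finset.mem_filter, Finset.mem_powersetCard] at hA
      obtain ⟨⟨hAs, hAcard⟩, hBA⟩ := hA
      rw [Finset.mem_coe, Finset.mem_powersetCard]
      exact ⟨Finset.sdiff_subset_sdiff hAs (le_refl _),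
        by rw [Finset.card_sdiff_of_subset hBA, hAcard]⟩
    · intro D hD
      rw [Finset.mem_coe, Finset.mem_powersetCard] at hD
      obtain ⟨hDs, hDcard⟩ := hD
      rw [Finset.subset_sdiff] at hDs
      rw [Finset.mem_coe, Finset.mem_filter, Finset.mem_powersetCard]
      refine ⟨⟨Finset.union_subset hB hDs.1, ?_⟩, Finset.subset_union_left⟩
      rw [Finset.card_union_of_disjoint hDs.2.symm, hDcard]
      omega
    · intro A hA
      rw [Finset.mem_coe, Finset.mem_filter] at hA
      exact Finset.union_sdiff_of_subset hA.2
    · intro D hD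
      rw [Finset.mem_coe, Finset.mem_powersetCard, Finset.subset_sdiff] at hD
      exact Finset.union_sdiff_cancel_left hD.1.2.symm
  rw [hbij, Finset.card_powersetCard, Finset.card_sdiff_of_subset hB]

lemma cnt_zero {s B : Finset (Fin N)} {j : ℕ} (hjb : j < B.card) :
    ((s.powersetCard j).filter (fun A => B ⊆ A)).card = 0 := by
  rw [Finset.card_eq_zero, Finset.filter_eq_empty_iff]
  intro A hA hBA
  rw [Finset.mem_powersetCard] at hA
  have := Finset.card_le_card hBA
  omega

lemma coeff_sum {C b : ℕ} (hC1 : 1 ≤ C) (hCN : C < N) (hb : b ≤ N - 1)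
    (cnt : ℕ → ℕ) (hcnt0 : ∀ j, j < b → cnt j = 0)
    (hcnt : ∀ j, b ≤ j → cnt j = (N - 1 - b).choose (j - b)) :
    ∑ j ∈ Finset.range C, (cnt j : ℝ) * (-1) ^ (j + b)
      = if b < C then (-1 : ℝ) ^ (C - 1 - b) * ((N - 2 - b).choose (C - 1 - b) : ℝ) else 0 := by
  by_cases hbC : b < C
  · rw [if_pos hbC]
    rw [Finset.range_eq_Ico, ← Finset.sum_Ico_consecutive _ (Nat.zero_le b) (le_of_lt hbC)]
    have h0 : ∑ j ∈ Finset.Ico 0 b, (cnt j : ℝ) * (-1) ^ (j + b) = 0 := by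
      refine Finset.sum_eq_zero fun j hj => ?_
      rw [Finset.mem_Ico] at hj
      rw [hcnt0 j hj.2]
      simp
    rw [h0, zero_add, Finset.sum_Ico_eq_sum_range]
    have hCb : C - b = (C - 1 - b) + 1 := by omega
    rw [hCb]
    have hterm : ∀ t ∈ Finset.range ((C - 1 - b) + 1),
        ((cnt (b + t) : ℝ) * (-1) ^ (b + t + b))
          = (-1 : ℝ) ^ t * (((N - 1 - b).choose t : ℕ) : ℝ) := by
      intro t _
      rw [hcnt (b + t) (by omega)]
      have h2b : b + t + b = 2 * b + t := by omega
      rw [h2b, pow_add, pow_mul, neg_one_sq, one_pow, one_mul]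
      have : b + t - b = t := by omega
      rw [this]
      ring
    rw [Finset.sum_congr rfl hterm, alt_sum (N - 1 - b) (by omega) (C - 1 - b)]
    have : N - 1 - b - 1 = N - 2 - b := by omega
    rw [this]
  · rw [if_neg hbC]
    refine Finset.sum_eq_zero fun j hj => ?_
    rw [Finset.mem_range] at hj
    rw [hcnt0 j (by omega)]
    simp

/-- collapse the inclusion–exclusion: the alternating-coefficient form of the
sum of `Qf` over small subsets of a fixed `(N-1)`-element set `s`. -/
lemma Ki (hC1 : 1 ≤ C) (hCN : C < N) {s : Finset (Fin N)} (hs : s.card = N - 1) :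
    ∑ j ∈ Finset.range C, ∑ A ∈ s.powersetCard j, Qf p A
      = ∑ j ∈ Finset.range C, ((-1 : ℝ) ^ (C - 1 - j) * ((N - 2 - j).choose (C - 1 - j) : ℝ))
          * ∑ B ∈ s.powersetCard j, (1 - sp p B)⁻¹ := by
  -- LHS: expand Qf and swap the (A, B ⊆ A) double sum
  have hL : ∀ j, ∑ A ∈ s.powersetCard j, Qf p A
      = ∑ B ∈ s.powerset,
          (((s.powersetCard j).filter (fun A => B ⊆ A)).card : ℝ)
            * ((-1 : ℝ) ^ (j + B.card) * (1 - sp p B)⁻¹) := by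
    intro j
    have hQ : ∀ A ∈ s.powersetCard j, Qf p A
        = ∑ B ∈ A.powerset, (-1 : ℝ) ^ (j + B.card) * (1 - sp p B)⁻¹ := by
      intro A hA
      rw [Qf, (Finset.mem_powersetCard.1 hA).2]
    rw [Finset.sum_congr rfl hQ]
    rw [Finset.sum_comm' (s' := fun B => (s.powersetCard j).filter (fun A => B ⊆ A))
      (t' := s.powerset) ?hcond]
    case hcond =>
      intro A B
      simp only [Finset.mem_filter, Finset.mem_powerset, Finset.mem_powersetCard]
      constructor
      · rintro ⟨⟨hAs, hAc⟩, hBA⟩; exact ⟨⟨⟨hAs, hAc⟩, hBA⟩, hBA.trans hAs⟩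
      · rintro ⟨⟨h1, h2⟩, _⟩; exact ⟨h1, h2⟩
    refine Finset.sum_congr rfl fun B hB => ?_
    rw [Finset.sum_const, nsmul_eq_mul]
  rw [Finset.sum_congr rfl fun j _ => hL j, Finset.sum_comm]
  -- RHS: turn into a sum over the full powerset with an `ite`
  have hR : ∀ j ∈ Finset.range C,
      ((-1 : ℝ) ^ (C - 1 - j) * ((N - 2 - j).choose (C - 1 - j) : ℝ))
          * ∑ B ∈ s.powersetCard j, (1 - sp p B)⁻¹
        = ∑ B ∈ s.powerset, (if B.card = j then
            ((-1 : ℝ) ^ (C - 1 - B.card) * ((N - 2 - B.card).choose (C - 1 - B.card) : ℝ))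
              * (1 - sp p B)⁻¹ else 0) := by
    intro j _
    rw [Finset.mul_sum, Finset.powersetCard_eq_filter, Finset.sum_filter]
    refine Finset.sum_congr rfl fun B _ => ?_
    by_cases h : B.card = j <;> simp [h]
  conv_rhs => rw [Finset.sum_congr rfl hR, Finset.sum_comm]
  refine Finset.sum_congr rfl fun B hB => ?_
  have hBs : B ⊆ s := Finset.mem_powerset.1 hB
  have hbcard : B.card ≤ N - 1 := hs ▸ Finset.card_le_card hBs
  have hite : ∑ j ∈ Finset.range C, (if B.card = j then
      ((-1 : ℝ) ^ (C - 1 - B.card) * ((N - 2 - B.card).choose (C - 1 - B.card) : ℝ))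
        * (1 - sp p B)⁻¹ else 0)
      = if B.card < C then ((-1 : ℝ) ^ (C - 1 - B.card)
          * ((N - 2 - B.card).choose (C - 1 - B.card) : ℝ)) * (1 - sp p B)⁻¹ else 0 := by
    rw [Finset.sum_ite_eq]
    simp [Finset.mem_range]
  rw [hite]
  have hscal := coeff_sum hC1 hCN hbcard
      (fun j => ((s.powersetCard j).filter (fun A => B ⊆ A)).card)
      (fun j hj => by simpa using cnt_zero (B := B) (s := s) hj)
      (fun j hj => by simpa [hs] using cnt_eq hBs hj)
  calc ∑ j ∈ Finset.range C, (((s.powersetCard j).filter (fun A => B ⊆ A)).card : ℝ)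
        * ((-1 : ℝ) ^ (j + B.card) * (1 - sp p B)⁻¹)
      = (∑ j ∈ Finset.range C, (((s.powersetCard j).filter (fun A => B ⊆ A)).card : ℝ)
          * (-1 : ℝ) ^ (j + B.card)) * (1 - sp p B)⁻¹ := by
        rw [Finset.sum_mul]
        exact Finset.sum_congr rfl fun j _ => by ring
    _ = _ := by
        rw [hscal]
        by_cases h : B.card < C <;> simp [h]

lemma swap_i (j : ℕ) (g : Finset (Fin N) → ℝ) :
    ∑ B ∈ (univ : Finset (Fin N)).powersetCard j, (∑ i ∈ Bᶜ, (p i) ^ 2) * g B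
      = ∑ i : Fin N, (p i) ^ 2 * ∑ B ∈ ({i}ᶜ : Finset (Fin N)).powersetCard j, g B := by
  have h1 : ∀ B ∈ (univ : Finset (Fin N)).powersetCard j,
      (∑ i ∈ Bᶜ, (p i) ^ 2) * g B = ∑ i ∈ Bᶜ, (p i) ^ 2 * g B := fun B _ => Finset.sum_mul ..
  rw [Finset.sum_congr rfl h1]
  rw [Finset.sum_comm' (s' := fun i => (({i}ᶜ : Finset (Fin N)).powersetCard j))
    (t' := (univ : Finset (Fin N))) ?hcond]
  case hcond =>
    intro B i
    simp only [Finset.mem_powersetCard, Finset.mem_compl, Finset.mem_univ, and_true,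
      Finset.subset_univ, true_and]
    constructor
    · rintro ⟨hc, hi⟩
      exact ⟨fun x hx => Finset.mem_compl.2 fun hxi =>
        hi ((Finset.mem_singleton.1 hxi) ▸ hx), hc⟩
    · rintro ⟨hsub, hc⟩
      refine ⟨hc, fun hiB => ?_⟩
      have := Finset.mem_compl.1 (hsub hiB)
      simp at this
  exact Finset.sum_congr rfl fun i _ => (Finset.mul_sum ..).symm

lemma hitRate_eq {C : ℕ} (hC1 : 1 ≤ C) (hCN : C < N) (h1 : ∑ i, p i = 1) :
    hitRate N C p = ∑ j ∈ Finset.range C, ej p j := by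
  have hcompl_card : ∀ i : Fin N, ({i}ᶜ : Finset (Fin N)).card = N - 1 := by
    intro i
    rw [Finset.card_compl, Finset.card_singleton, Fintype.card_fin]
  -- the RHS, reorganized
  have hejs : ∀ j, ej p j
      = ∑ i : Fin N, (p i) ^ 2 * ∑ A ∈ ({i}ᶜ : Finset (Fin N)).powersetCard j, Qf p A := by
    intro j
    rw [← swap_i j (Qf p)]
    exact Finset.sum_congr rfl fun A _ => mul_comm _ _
  have hRHS : ∑ j ∈ Finset.range C, ej p j
      = ∑ i : Fin N, (p i) ^ 2 *
          ∑ j ∈ Finset.range C, ∑ A ∈ ({i}ᶜ : Finset (Fin N)).powersetCard j, Qf p A := by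
    rw [Finset.sum_congr rfl fun j _ => hejs j, Finset.sum_comm]
    exact Finset.sum_congr rfl fun i _ => (Finset.mul_sum ..).symm
  -- the LHS
  have step1 : hitRate N C p
      = ∑ j ∈ Finset.range C, ((-1 : ℝ) ^ (C - 1 - j) * ((N - 2 - j).choose (C - 1 - j) : ℝ)) *
          ∑ B ∈ (univ : Finset (Fin N)).powersetCard j, (∑ i ∈ Bᶜ, (p i) ^ 2)
            * (1 - sp p B)⁻¹ := by
    unfold hitRate
    refine Finset.sum_nbij' (fun m => N - m) (fun j => N - j) ?_ ?_ ?_ ?_ ?_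
    · intro m hm
      beta_reduce
      rw [Finset.mem_Icc] at hm
      rw [Finset.mem_range]
      omega
    · intro j hj
      beta_reduce
      rw [Finset.mem_range] at hj
      rw [Finset.mem_Icc]
      omega
    · intro m hm
      beta_reduce
      rw [Finset.mem_Icc] at hm
      omega
    · intro j hj
      beta_reduce
      rw [Finset.mem_range] at hj
      omega
    · intro m hm
      beta_reduce
      rw [Finset.mem_Icc] at hm
      have he1 : m - (N - C + 1) = C - 1 - (N - m) := by omega
      have he2 : m - 2 = N - 2 - (N - m) := by omega
      rw [he1, he2]
      congr 1
      -- now the inner sums over R vs B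
      refine Finset.sum_nbij' (fun R => Rᶜ) (fun B => Bᶜ) ?_ ?_ ?_ ?_ ?_
      · intro R hR
        rw [Finset.mem_powersetCard_univ] at hR ⊢
        rw [Finset.card_compl, Fintype.card_fin, hR]
      · intro B hB
        rw [Finset.mem_powersetCard_univ] at hB ⊢
        rw [Finset.card_compl, Fintype.card_fin, hB]
        omega
      · intro R _; exact compl_compl R
      · intro B _; exact compl_compl B
      · intro R hR
        have hsp : (1 - sp p (Rᶜ)) = ∑ i ∈ R, p i := by
          have := sp_compl h1 (Rᶜ)
          rw [compl_compl] at this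
          rw [← this]; rfl
        rw [compl_compl, hsp, div_eq_mul_inv]
  rw [step1, hRHS]
  have step3 : ∑ j ∈ Finset.range C,
      ((-1 : ℝ) ^ (C - 1 - j) * ((N - 2 - j).choose (C - 1 - j) : ℝ)) *
        ∑ B ∈ (univ : Finset (Fin N)).powersetCard j, (∑ i ∈ Bᶜ, (p i) ^ 2) * (1 - sp p B)⁻¹
      = ∑ i : Fin N, (p i) ^ 2 *
          ∑ j ∈ Finset.range C,
            ((-1 : ℝ) ^ (C - 1 - j) * ((N - 2 - j).choose (C - 1 - j) : ℝ)) *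
              ∑ B ∈ ({i}ᶜ : Finset (Fin N)).powersetCard j, (1 - sp p B)⁻¹ := by
    have hj : ∀ j ∈ Finset.range C,
        ((-1 : ℝ) ^ (C - 1 - j) * ((N - 2 - j).choose (C - 1 - j) : ℝ)) *
          ∑ B ∈ (univ : Finset (Fin N)).powersetCard j, (∑ i ∈ Bᶜ, (p i) ^ 2) * (1 - sp p B)⁻¹
        = ∑ i : Fin N, (p i) ^ 2 *
            (((-1 : ℝ) ^ (C - 1 - j) * ((N - 2 - j).choose (C - 1 - j) : ℝ)) *
              ∑ B ∈ ({i}ᶜ : Finset (Fin N)).powersetCard j, (1 - sp p B)⁻¹) := by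
      intro j _
      rw [swap_i j (fun B => (1 - sp p B)⁻¹), Finset.mul_sum]
      exact Finset.sum_congr rfl fun i _ => by ring
    rw [Finset.sum_congr rfl hj, Finset.sum_comm]
    exact Finset.sum_congr rfl fun i _ => (Finset.mul_sum ..).symm
  rw [step3]
  refine Finset.sum_congr rfl fun i _ => ?_
  congr 1
  exact (Ki hC1 hCN (hcompl_card i)).symm

end basic

section uniform

variable {C : ℕ}

lemma uniform_pos (hN : 2 ≤ N) : ∀ i : Fin N, 0 < (fun _ : Fin N => (N : ℝ)⁻¹) i := by
  intro i
  have : (0 : ℝ) < N := by positivity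
  simp only
  positivity

lemma uniform_sum (hN : 2 ≤ N) : ∑ _i : Fin N, (N : ℝ)⁻¹ = 1 := by
  rw [Finset.sum_const, Finset.card_univ, Fintype.card_fin, nsmul_eq_mul]
  field_simp

lemma ej_uniform (hN : 2 ≤ N) {j : ℕ} (hj : j < N) :
    ej (fun _ : Fin N => (N : ℝ)⁻¹) j = (N : ℝ)⁻¹ := by
  have hp := uniform_pos (N := N) hN
  have h1 : ∑ i : Fin N, (fun _ : Fin N => (N : ℝ)⁻¹) i = 1 := uniform_sum hN
  have hN0 : (N : ℝ) ≠ 0 := by positivity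
  unfold ej
  have hterm : ∀ A ∈ (univ : Finset (Fin N)).powersetCard j,
      Qf (fun _ : Fin N => (N : ℝ)⁻¹) A * ∑ i ∈ Aᶜ, ((fun _ : Fin N => (N : ℝ)⁻¹) i) ^ 2
      = (N : ℝ)⁻¹ * (Qf (fun _ : Fin N => (N : ℝ)⁻¹) A
          * (1 - sp (fun _ : Fin N => (N : ℝ)⁻¹) A)) := by
    intro A hA
    have hcard := Finset.mem_powersetCard_univ.1 hA
    have hcc : Aᶜ.card = N - j := by
      rw [Finset.card_compl, hcard, Fintype.card_fin]
    have h2 : ∑ i ∈ Aᶜ, ((fun _ : Fin N => (N : ℝ)⁻¹) i) ^ 2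
        = ((N - j : ℕ) : ℝ) * ((N : ℝ)⁻¹) ^ 2 := by
      rw [Finset.sum_const, hcc, nsmul_eq_mul]
    have h3 : 1 - sp (fun _ : Fin N => (N : ℝ)⁻¹) A = ((N - j : ℕ) : ℝ) * (N : ℝ)⁻¹ := by
      have hsp : sp (fun _ : Fin N => (N : ℝ)⁻¹) A = (j : ℝ) * (N : ℝ)⁻¹ := by
        rw [sp, Finset.sum_const, hcard, nsmul_eq_mul]
      rw [hsp, Nat.cast_sub (by omega)]
      field_simp
    rw [h2, h3]
    ring
  rw [Finset.sum_congr rfl hterm, ← Finset.mul_sum, m_one hp h1 j hj, mul_one]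

lemma hitRate_uniform (hN : 2 ≤ N) (hC1 : 1 ≤ C) (hCN : C < N) :
    hitRate N C (fun _ : Fin N => (N : ℝ)⁻¹) = (C : ℝ) / N := by
  rw [hitRate_eq hC1 hCN (uniform_sum hN)]
  rw [Finset.sum_congr rfl fun j hj =>
    ej_uniform hN (lt_trans (Finset.mem_range.1 hj) hCN)]
  rw [Finset.sum_const, Finset.card_range, nsmul_eq_mul, div_eq_mul_inv]

end uniform
end LRUAux

/-- Uniform popularity is the unique worst case: for every nonuniform
`p ∈ Δ_N°` one has `H_C(p) > H_C(u) = C/N`; hence the uniform vector `u`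
is the unique global minimizer of the hit rate on `Δ_N°`, and the miss
rate `1 - H_C(p)` is uniquely maximized at `u`. -/
theorem uniform_unique_minimizer (N C : ℕ) (hN : 2 ≤ N) (hC1 : 1 ≤ C) (hCN : C < N)
    (p : Fin N → ℝ) (hppos : ∀ i, 0 < p i) (hpsum : ∑ i, p i = 1)
    (hpu : p ≠ fun _ => (N : ℝ)⁻¹) :
    hitRate N C p > hitRate N C (fun _ => (N : ℝ)⁻¹) ∧
      hitRate N C (fun _ => (N : ℝ)⁻¹) = (C : ℝ) / N ∧
      1 - hitRate N C p < 1 - hitRate N C (fun _ => (N : ℝ)⁻¹) := by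
  have hu : hitRate N C (fun _ => (N : ℝ)⁻¹) = (C : ℝ) / N :=
    LRUAux.hitRate_uniform hN hC1 hCN
  have hNR : (0 : ℝ) < N := by positivity
  have hCR : (0 : ℝ) < C := by positivity
  -- there exist two items with distinct popularity
  have hex : ∃ a b : Fin N, p a ≠ p b := by
    by_contra h
    push_neg at h
    apply hpu
    funext i
    have hconst : ∀ x : Fin N, p x = p i := fun x => h x i
    have hsum2 : ∑ x : Fin N, p x = (N : ℝ) * p i := by
      rw [Finset.sum_congr rfl fun x _ => hconst x, Finset.sum_const, Finset.card_univ,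
        Fintype.card_fin, nsmul_eq_mul]
    rw [hpsum] at hsum2
    field_simp
    linarith
  obtain ⟨a, b, hab⟩ := hex
  set e := LRUAux.ej p with he
  have hEq : hitRate N C p = ∑ j ∈ Finset.range C, e j :=
    LRUAux.hitRate_eq hC1 hCN hpsum
  have htot : ∑ j ∈ Finset.range N, e j = 1 :=
    LRUAux.sum_ej_total hppos hpsum (by omega)
  have hlow : (C : ℝ) * e (C - 1) ≤ hitRate N C p := by
    rw [hEq]
    calc (C : ℝ) * e (C - 1) = ∑ _j ∈ Finset.range C, e (C - 1) := by
          rw [Finset.sum_const, Finset.card_range, nsmul_eq_mul]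
      _ ≤ ∑ j ∈ Finset.range C, e j := by
          refine Finset.sum_le_sum fun j hj => ?_
          rw [Finset.mem_range] at hj
          exact LRUAux.ej_chain hppos hpsum (C - 1) (by omega) (by omega)
  have htail : ∑ j ∈ Finset.Ico C N, e j ≤ ((N - C : ℕ) : ℝ) * e C := by
    calc ∑ j ∈ Finset.Ico C N, e j ≤ ∑ _j ∈ Finset.Ico C N, e C := by
          refine Finset.sum_le_sum fun j hj => ?_
          rw [Finset.mem_Ico] at hj
          exact LRUAux.ej_chain hppos hpsum j hj.1 hj.2
      _ = ((N - C : ℕ) : ℝ) * e C := by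
          rw [Finset.sum_const, Nat.card_Ico, nsmul_eq_mul]
  have hstrict : e C < e (C - 1) := by
    have h := LRUAux.ej_strict hppos hpsum (j := C - 1) (by omega) hab
    have : C - 1 + 1 = C := by omega
    rwa [this] at h
  have hsplit : (1 : ℝ) = hitRate N C p + ∑ j ∈ Finset.Ico C N, e j := by
    rw [hEq, ← htot, Finset.range_eq_Ico, ← Finset.sum_Ico_consecutive _ (Nat.zero_le C) hCN.le, ← Finset.range_eq_Ico]
  have hNC : (0 : ℝ) < ((N - C : ℕ) : ℝ) := by
    have : 1 ≤ N - C := by omega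
    exact_mod_cast Nat.lt_of_lt_of_le Nat.zero_lt_one (by exact_mod_cast this)
  have hcast : ((N - C : ℕ) : ℝ) = (N : ℝ) - C := by
    rw [Nat.cast_sub hCN.le]
  have hmain : (C : ℝ) / N < hitRate N C p := by
    rw [div_lt_iff₀ hNR]
    have k2 : ((N - C : ℕ) : ℝ) * e C < ((N - C : ℕ) : ℝ) * e (C - 1) :=
      mul_lt_mul_of_pos_left hstrict hNC
    have k3 : (1 : ℝ) < hitRate N C p + ((N - C : ℕ) : ℝ) * e (C - 1) := by linarith
    have k6 := mul_lt_mul_of_pos_left k3 hCR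
    have k5 : ((N - C : ℕ) : ℝ) * ((C : ℝ) * e (C - 1)) ≤ ((N - C : ℕ) : ℝ) * hitRate N C p :=
      mul_le_mul_of_nonneg_left hlow hNC.le
    have k7 : ((N - C : ℕ) : ℝ) * hitRate N C p = ((N : ℝ) - C) * hitRate N C p := by
      rw [hcast]
    nlinarith [k6, k5, k7]
  refine ⟨by rw [hu]; exact hmain, hu, by rw [hu]; linarith⟩
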